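/- The number of ordered ranked trees of size n that are caterpillars or pseudocaterpillars equals 3·2^{n−2} for n ≥ 4, with 2^{n−1} caterpillars and 2^{n−2} pseudocaterpillars. -/
import Mathlib


/-- Rooted binary plane trees with a natural-number label at each internal node. -/
inductive OTree where
  | leaf : OTree
  | node : ℕ → OTree → OTree → OTree
  deriving DecidableEq

/-- Multiset of internal-node labels. -/
def iLabels : OTree → Multiset ℕ
  | .leaf => 0
  | .node k a b => k ::ₘ (iLabels a + iLabels b)

/-- Size of a tree: its number of internal nodes. -/
def size (t : OTree) : ℕ := (iLabels t).card

/-- Internal labels increase along every root-to-leaf path. -/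
def Increasing : OTree → Prop
  | .leaf => True
  | .node k a b => (∀ j ∈ iLabels a + iLabels b, k < j) ∧ Increasing a ∧ Increasing b

/-- An ordered ranked tree of size `n`: internal nodes bijectively labeled
`1,…,n`, increasingly from the root toward the leaves. -/
def IsOrderedRankedTree (n : ℕ) (t : OTree) : Prop :=
  iLabels t = (Finset.Icc 1 n).val ∧ Increasing t

/-- A caterpillar: every internal node has at least one leaf child. -/
def IsCat : OTree → Prop
  | .leaf => True
  | .node _ a b => (a = .leaf ∨ b = .leaf) ∧ IsCat a ∧ IsCat b

/-- The 1-2 condition for a pair of sibling subtrees: one has size at least 1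
and the other size at least 2. -/
def OneTwoPair (a b : OTree) : Prop :=
  (1 ≤ size a ∧ 2 ≤ size b) ∨ (2 ≤ size a ∧ 1 ≤ size b)

/-- No internal node of the tree satisfies the 1-2 condition. -/
def NoOneTwo : OTree → Prop
  | .leaf => True
  | .node _ a b => ¬ OneTwoPair a b ∧ NoOneTwo a ∧ NoOneTwo b

/-- A pseudocaterpillar: not a caterpillar, yet no internal node satisfies the
1-2 condition. -/
def IsPseudoCat (t : OTree) : Prop := ¬ IsCat t ∧ NoOneTwo t

/-! ### Auxiliary lemmas -/

lemma size_node (k : ℕ) (a b : OTree) : size (.node k a b) = size a + size b + 1 := by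
  simp [size, iLabels]

lemma eq_leaf_of_iLabels {t : OTree} (h : iLabels t = 0) : t = .leaf := by
  cases t with
  | leaf => rfl
  | node k a b => exact absurd h (by simp [iLabels])

lemma eq_leaf_of_size {t : OTree} (h : size t = 0) : t = .leaf :=
  eq_leaf_of_iLabels (Multiset.card_eq_zero.1 h)

lemma size_eq_one {t : OTree} (h : size t = 1) : ∃ j, t = .node j .leaf .leaf := by
  cases t with
  | leaf => simp [size, iLabels] at h
  | node k a b =>
    rw [size_node] at h
    exact ⟨k, by rw [eq_leaf_of_size (t := a) (by omega), eq_leaf_of_size (t := b) (by omega)]⟩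

lemma isCat_of_small : ∀ t, NoOneTwo t → size t ≤ 2 → IsCat t := by
  intro t
  induction t with
  | leaf => intro _ _; trivial
  | node k a b iha ihb =>
    intro hno hs
    obtain ⟨h12, hna, hnb⟩ := hno
    rw [size_node] at hs
    refine ⟨?_, iha hna (by omega), ihb hnb (by omega)⟩
    rcases Nat.eq_zero_or_pos (size a) with h | h
    · exact Or.inl (eq_leaf_of_size h)
    · exact Or.inr (eq_leaf_of_size (by omega))

lemma Icc_cons {k n : ℕ} (h : k ≤ n) :
    (Finset.Icc k n).val = k ::ₘ (Finset.Icc (k+1) n).val := by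
  have h2 : insert k (Finset.Icc (k+1) n) = Finset.Icc k n := by
    ext x; simp [Finset.mem_Icc]; omega
  rw [← h2, Finset.insert_val_of_notMem (by simp [Finset.mem_Icc])]

lemma head_of_Icc {j k n : ℕ} {s : Multiset ℕ}
    (h : j ::ₘ s = (Finset.Icc k n).val)
    (hj : ∀ x ∈ s, j < x) :
    j = k ∧ k ≤ n ∧ s = (Finset.Icc (k+1) n).val := by
  have hkn : k ≤ n := by
    by_contra hkn
    rw [Finset.Icc_eq_empty (by omega)] at h
    exact Multiset.cons_ne_zero h
  have hk : k ∈ j ::ₘ s := by rw [h]; exact Finset.mem_def.1 (Finset.mem_Icc.2 ⟨le_refl _, hkn⟩)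
  have hjk : j = k := by
    rcases Multiset.mem_cons.1 hk with h1 | h2
    · exact h1.symm
    · have hjm : j ∈ (Finset.Icc k n).val := by rw [← h]; exact Multiset.mem_cons_self _ _
      have hkj : k ≤ j := (Finset.mem_Icc.1 (Finset.mem_def.2 hjm)).1
      exact absurd (hj k h2) (by omega)
  subst hjk
  rw [Icc_cons hkn] at h
  exact ⟨rfl, hkn, (Multiset.cons_inj_right _).1 h⟩

lemma card_Icc_val (k n : ℕ) : ((Finset.Icc k n).val).card = n + 1 - k := by
  have : ((Finset.Icc k n).val).card = (Finset.Icc k n).card := rfl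
  rw [this, Nat.card_Icc]

/-! ### Spines (caterpillars) -/

def spine (k : ℕ) : List Bool → OTree
  | [] => .node k .leaf .leaf
  | true :: bs => .node k (spine (k+1) bs) .leaf
  | false :: bs => .node k .leaf (spine (k+1) bs)

lemma spine_ne_leaf (k : ℕ) (bs : List Bool) : spine k bs ≠ .leaf := by
  cases bs with
  | nil => simp [spine]
  | cons b bs => cases b <;> simp [spine]

lemma iLabels_spine : ∀ (bs : List Bool) (k n : ℕ), k + bs.length = n →
    iLabels (spine k bs) = (Finset.Icc k n).val := by
  intro bs
  induction bs with
  | nil =>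
    intro k n h
    simp at h
    subst h
    rw [Icc_cons (le_refl k), Finset.Icc_eq_empty (by omega)]
    simp [spine, iLabels]
  | cons b bs ih =>
    intro k n h
    simp at h
    have hrec := ih (k+1) n (by omega)
    cases b <;>
      · simp only [spine, iLabels, hrec, zero_add, add_zero]
        rw [Icc_cons (show k ≤ n by omega)]

lemma mem_spine {j k : ℕ} {bs : List Bool} (h : j ∈ iLabels (spine k bs)) : k ≤ j := by
  rw [iLabels_spine bs k (k + bs.length) rfl] at h
  exact (Finset.mem_Icc.1 (Finset.mem_def.2 h)).1

lemma increasing_spine : ∀ (bs : List Bool) (k : ℕ), Increasing (spine k bs) := by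
  intro bs
  induction bs with
  | nil => intro k; exact ⟨by simp [iLabels], trivial, trivial⟩
  | cons b bs ih =>
    intro k
    cases b
    · refine ⟨?_, trivial, ih (k+1)⟩
      intro j hj
      simp only [iLabels, zero_add] at hj
      have := mem_spine hj
      omega
    · refine ⟨?_, ih (k+1), trivial⟩
      intro j hj
      simp only [iLabels, add_zero] at hj
      have := mem_spine hj
      omega

lemma isCat_spine : ∀ (bs : List Bool) (k : ℕ), IsCat (spine k bs) := by
  intro bs
  induction bs with
  | nil => intro k; exact ⟨Or.inl rfl, trivial, trivial⟩
  | cons b bs ih =>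
    intro k
    cases b
    · exact ⟨Or.inl rfl, trivial, ih (k+1)⟩
    · exact ⟨Or.inr rfl, ih (k+1), trivial⟩

lemma spine_inj : ∀ (bs cs : List Bool) (k : ℕ), spine k bs = spine k cs → bs = cs := by
  intro bs
  induction bs with
  | nil =>
    intro cs k h
    cases cs with
    | nil => rfl
    | cons c cs =>
      exfalso
      cases c <;> simp [spine] at h <;>
        first
        | exact (spine_ne_leaf _ _ h).elim
        | exact (spine_ne_leaf _ _ h.symm).elim
        | exact (spine_ne_leaf _ _ h.1).elim
        | exact (spine_ne_leaf _ _ h.1.symm).elim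
        | exact (spine_ne_leaf _ _ h.2).elim
        | exact (spine_ne_leaf _ _ h.2.symm).elim
  | cons b bs ih =>
    intro cs k h
    cases cs with
    | nil =>
      exfalso
      cases b <;> simp [spine] at h <;>
        first
        | exact (spine_ne_leaf _ _ h).elim
        | exact (spine_ne_leaf _ _ h.symm).elim
        | exact (spine_ne_leaf _ _ h.1).elim
        | exact (spine_ne_leaf _ _ h.1.symm).elim
        | exact (spine_ne_leaf _ _ h.2).elim
        | exact (spine_ne_leaf _ _ h.2.symm).elim
    | cons c cs =>
      cases b <;> cases c <;> simp [spine] at h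
      · rw [ih cs (k+1) h]
      · first
        | exact (spine_ne_leaf _ _ h).elim
        | exact (spine_ne_leaf _ _ h.symm).elim
        | exact (spine_ne_leaf _ _ h.1).elim
        | exact (spine_ne_leaf _ _ h.1.symm).elim
        | exact (spine_ne_leaf _ _ h.2).elim
        | exact (spine_ne_leaf _ _ h.2.symm).elim
      · first
        | exact (spine_ne_leaf _ _ h).elim
        | exact (spine_ne_leaf _ _ h.symm).elim
        | exact (spine_ne_leaf _ _ h.1).elim
        | exact (spine_ne_leaf _ _ h.1.symm).elim
        | exact (spine_ne_leaf _ _ h.2).elim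
        | exact (spine_ne_leaf _ _ h.2.symm).elim
      · rw [ih cs (k+1) h]

lemma cat_struct : ∀ t, Increasing t → IsCat t → ∀ k n, k ≤ n →
    iLabels t = (Finset.Icc k n).val →
    ∃ bs : List Bool, k + bs.length = n ∧ t = spine k bs := by
  intro t
  induction t with
  | leaf =>
    intro _ _ k n hkn h
    exfalso
    have : k ∈ (iLabels OTree.leaf : Multiset ℕ) := by
      rw [h]; exact Finset.mem_def.1 (Finset.mem_Icc.2 ⟨le_refl _, hkn⟩)
    simp [iLabels] at this
  | node j a b iha ihb =>
    intro hinc hcat k n hkn hlab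
    obtain ⟨hj, ha, hb⟩ := hinc
    obtain ⟨hcl, hca, hcb⟩ := hcat
    have hlab' : j ::ₘ (iLabels a + iLabels b) = (Finset.Icc k n).val := hlab
    obtain ⟨rfl, -, hs⟩ := head_of_Icc hlab' hj
    rcases Nat.eq_or_lt_of_le hkn with rfl | hlt
    · rw [Finset.Icc_eq_empty (by omega)] at hs
      simp only [Finset.empty_val] at hs
      have hcard := congrArg Multiset.card hs
      simp only [Multiset.card_add, Multiset.card_zero] at hcard
      rw [eq_leaf_of_iLabels (t := a) (Multiset.card_eq_zero.1 (by omega)),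
        eq_leaf_of_iLabels (t := b) (Multiset.card_eq_zero.1 (by omega))]
      exact ⟨[], by simp, rfl⟩
    · rcases hcl with rfl | rfl
      · simp only [iLabels, zero_add] at hs
        obtain ⟨bs, hlen, rfl⟩ := ihb hb hcb (j+1) n (by omega) hs
        exact ⟨false :: bs, by simp; omega, rfl⟩
      · simp only [iLabels, add_zero] at hs
        obtain ⟨bs, hlen, rfl⟩ := iha ha hca (j+1) n (by omega) hs
        exact ⟨true :: bs, by simp; omega, rfl⟩

/-! ### Pseudo-spines (pseudocaterpillars) -/

def pbase (k : ℕ) : Bool → OTree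
  | true => .node k (.node (k+1) .leaf .leaf) (.node (k+2) .leaf .leaf)
  | false => .node k (.node (k+2) .leaf .leaf) (.node (k+1) .leaf .leaf)

def pspine (k : ℕ) : List Bool → Bool → OTree
  | [], c => pbase k c
  | true :: bs, c => .node k (pspine (k+1) bs c) .leaf
  | false :: bs, c => .node k .leaf (pspine (k+1) bs c)

lemma iLabels_pbase (k : ℕ) (c : Bool) :
    iLabels (pbase k c) = (Finset.Icc k (k+2)).val := by
  have e : (Finset.Icc k (k+2)).val = k ::ₘ (k+1) ::ₘ (k+2) ::ₘ 0 := by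
    rw [Icc_cons (show k ≤ k+2 by omega), Icc_cons (show k+1 ≤ k+2 by omega),
      Icc_cons (show k+2 ≤ k+2 by omega), Finset.Icc_eq_empty (by omega)]
    rfl
  rw [e]
  cases c
  · show (k ::ₘ (((k+2) ::ₘ (0+0)) + ((k+1) ::ₘ (0+0))) : Multiset ℕ) = _
    simp only [add_zero, Multiset.cons_add, zero_add]
    rw [Multiset.cons_swap (k+2) (k+1)]
  · show (k ::ₘ (((k+1) ::ₘ (0+0)) + ((k+2) ::ₘ (0+0))) : Multiset ℕ) = _
    simp only [add_zero, Multiset.cons_add, zero_add]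

lemma iLabels_pspine : ∀ (bs : List Bool) (c : Bool) (k n : ℕ), k + bs.length + 2 = n →
    iLabels (pspine k bs c) = (Finset.Icc k n).val := by
  intro bs
  induction bs with
  | nil =>
    intro c k n h
    simp at h
    rw [show (pspine k [] c) = pbase k c from rfl, iLabels_pbase, show n = k + 2 by omega]
  | cons b bs ih =>
    intro c k n h
    simp at h
    have hrec := ih c (k+1) n (by omega)
    cases b <;>
      · simp only [pspine, iLabels, hrec, zero_add, add_zero]
        rw [Icc_cons (show k ≤ n by omega)]

lemma mem_pspine {j k : ℕ} {bs : List Bool} {c : Bool}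
    (h : j ∈ iLabels (pspine k bs c)) : k ≤ j := by
  rw [iLabels_pspine bs c k (k + bs.length + 2) rfl] at h
  exact (Finset.mem_Icc.1 (Finset.mem_def.2 h)).1

lemma increasing_pspine : ∀ (bs : List Bool) (c : Bool) (k : ℕ),
    Increasing (pspine k bs c) := by
  intro bs
  induction bs with
  | nil =>
    intro c k
    cases c <;>
      refine ⟨?_, ⟨by simp [iLabels], trivial, trivial⟩, ⟨by simp [iLabels], trivial, trivial⟩⟩ <;>
      · intro j hj
        simp [iLabels] at hj
        rcases hj with h | h <;> omega
  | cons b bs ih =>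
    intro c k
    cases b
    · refine ⟨?_, trivial, ih c (k+1)⟩
      intro j hj
      simp only [iLabels, zero_add] at hj
      have := mem_pspine hj
      omega
    · refine ⟨?_, ih c (k+1), trivial⟩
      intro j hj
      simp only [iLabels, add_zero] at hj
      have := mem_pspine hj
      omega

lemma size_cherry (j : ℕ) : size (.node j .leaf .leaf) = 1 := by
  simp [size, iLabels]

lemma notCat_pspine : ∀ (bs : List Bool) (c : Bool) (k : ℕ), ¬ IsCat (pspine k bs c) := by
  intro bs
  induction bs with
  | nil =>
    intro c k hcat
    cases c <;> exact (by rcases hcat.1 with h | h <;> exact OTree.noConfusion h)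
  | cons b bs ih =>
    intro c k hcat
    cases b
    · exact ih c (k+1) hcat.2.2
    · exact ih c (k+1) hcat.2.1

lemma noOneTwo_pspine : ∀ (bs : List Bool) (c : Bool) (k : ℕ),
    NoOneTwo (pspine k bs c) := by
  intro bs
  induction bs with
  | nil =>
    intro c k
    cases c <;>
      exact ⟨by simp [OneTwoPair, size_cherry], ⟨by simp [OneTwoPair, size, iLabels], trivial, trivial⟩,
        ⟨by simp [OneTwoPair, size, iLabels], trivial, trivial⟩⟩
  | cons b bs ih =>
    intro c k
    cases b
    · exact ⟨by simp [OneTwoPair, size, iLabels], trivial, ih c (k+1)⟩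
    · exact ⟨by simp [OneTwoPair, size, iLabels], ih c (k+1), trivial⟩

lemma pspine_ne_leaf (k : ℕ) (bs : List Bool) (c : Bool) : pspine k bs c ≠ .leaf := by
  cases bs with
  | nil => cases c <;> simp [pspine, pbase]
  | cons b bs => cases b <;> simp [pspine]

lemma pspine_inj : ∀ (bs cs : List Bool) (c d : Bool) (k : ℕ),
    pspine k bs c = pspine k cs d → bs = cs ∧ c = d := by
  intro bs
  induction bs with
  | nil =>
    intro cs c d k h
    cases cs with
    | nil =>
      refine ⟨rfl, ?_⟩
      cases c <;> cases d <;> simp [pspine, pbase] at h <;> first | rfl | omega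
    | cons e cs =>
      exfalso
      cases c <;> cases e <;> simp [pspine, pbase] at h <;>
        first
        | exact (pspine_ne_leaf _ _ _ h.2.2).elim
        | exact (pspine_ne_leaf _ _ _ h.2.2.symm).elim
        | exact (pspine_ne_leaf _ _ _ h.2).elim
        | exact (pspine_ne_leaf _ _ _ h.2.symm).elim
        | exact h
        | omega
  | cons b bs ih =>
    intro cs c d k h
    cases cs with
    | nil =>
      exfalso
      cases b <;> cases d <;> simp [pspine, pbase] at h <;>
        first
        | exact (pspine_ne_leaf _ _ _ h.2.2).elim
        | exact (pspine_ne_leaf _ _ _ h.2.2.symm).elim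
        | exact (pspine_ne_leaf _ _ _ h.1).elim
        | exact (pspine_ne_leaf _ _ _ h.1.symm).elim
        | exact (pspine_ne_leaf _ _ _ h.2).elim
        | exact (pspine_ne_leaf _ _ _ h.2.symm).elim
        | exact h
        | omega
    | cons e cs =>
      cases b <;> cases e <;> simp [pspine] at h
      · obtain ⟨h1, h2⟩ := ih cs c d (k+1) h
        exact ⟨by rw [h1], h2⟩
      · exact (pspine_ne_leaf _ _ _ (by
          first | exact h | exact h.symm | exact h.1 | exact h.1.symm | exact h.2 | exact h.2.symm)).elim
      · exact (pspine_ne_leaf _ _ _ (by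
          first | exact h | exact h.symm | exact h.1 | exact h.1.symm | exact h.2 | exact h.2.symm)).elim
      · obtain ⟨h1, h2⟩ := ih cs c d (k+1) h
        exact ⟨by rw [h1], h2⟩

lemma pair_eq {a b c d : ℕ} (h : (a ::ₘ b ::ₘ 0 : Multiset ℕ) = c ::ₘ d ::ₘ 0) :
    (a = c ∧ b = d) ∨ (a = d ∧ b = c) := by
  rcases Multiset.cons_eq_cons.1 h with ⟨h1, h2⟩ | ⟨h1, cs, h2, h3⟩
  · left
    exact ⟨h1, by simpa using h2⟩
  · right
    have hcs : cs = 0 := by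
      have h4 := congrArg Multiset.card h2
      simp only [Multiset.card_cons, Multiset.card_zero] at h4
      exact Multiset.card_eq_zero.1 (by omega)
    subst hcs
    have hb : b = c := by simpa using h2
    have hd : d = a := by simpa using h3
    exact ⟨hd.symm, hb⟩

lemma pseudo_struct : ∀ t, Increasing t → NoOneTwo t → ¬ IsCat t → ∀ k n,
    iLabels t = (Finset.Icc k n).val →
    ∃ (bs : List Bool) (c : Bool), k + bs.length + 2 = n ∧ t = pspine k bs c := by
  intro t
  induction t with
  | leaf => intro _ _ hcat; exact absurd trivial hcat
  | node j a b iha ihb =>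
    intro hinc hno hcat k n hlab
    obtain ⟨hj, ha, hb⟩ := hinc
    obtain ⟨h12, hna, hnb⟩ := hno
    have hlab' : j ::ₘ (iLabels a + iLabels b) = (Finset.Icc k n).val := hlab
    obtain ⟨rfl, hkn, hs⟩ := head_of_Icc hlab' hj
    have hsum : size a + size b = n - j := by
      have h1 := congrArg Multiset.card hs
      rw [Multiset.card_add, card_Icc_val] at h1
      simp only [size]
      omega
    rcases Nat.eq_zero_or_pos (size a) with ha0 | ha1
    · -- a is a leaf
      have hal : a = .leaf := eq_leaf_of_size ha0
      subst hal
      have hcb : ¬ IsCat b := fun h => hcat ⟨Or.inl rfl, trivial, h⟩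
      have hb3 : 3 ≤ size b := by
        by_contra hb3
        exact hcb (isCat_of_small b hnb (by omega))
      simp only [iLabels, zero_add] at hs
      obtain ⟨bs, c, hlen, rfl⟩ := ihb hb hnb hcb (j+1) n hs
      exact ⟨false :: bs, c, by simp; omega, rfl⟩
    · rcases Nat.eq_zero_or_pos (size b) with hb0 | hb1
      · -- b is a leaf
        have hbl : b = .leaf := eq_leaf_of_size hb0
        subst hbl
        have hca : ¬ IsCat a := fun h => hcat ⟨Or.inr rfl, h, trivial⟩
        have ha3 : 3 ≤ size a := by
          by_contra ha3
          exact hca (isCat_of_small a hna (by omega))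
        simp only [iLabels, add_zero] at hs
        obtain ⟨bs, c, hlen, rfl⟩ := iha ha hna hca (j+1) n hs
        exact ⟨true :: bs, c, by simp; omega, rfl⟩
      · -- both children are cherries
        unfold OneTwoPair at h12
        have ha1' : size a = 1 ∧ size b = 1 := by omega
        obtain ⟨j1, rfl⟩ := size_eq_one ha1'.1
        obtain ⟨j2, rfl⟩ := size_eq_one ha1'.2
        have hn2 : n = j + 2 := by omega
        subst hn2
        have hs' : (j1 ::ₘ j2 ::ₘ 0 : Multiset ℕ) = (j+1) ::ₘ (j+2) ::ₘ 0 := by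
          have e : (Finset.Icc (j+1) (j+2)).val = (j+1) ::ₘ (j+2) ::ₘ 0 := by
            rw [Icc_cons (show j+1 ≤ j+2 by omega), Icc_cons (show j+2 ≤ j+2 by omega),
              Finset.Icc_eq_empty (by omega)]
            rfl
          rw [e] at hs
          simpa [iLabels] using hs
        rcases pair_eq hs' with ⟨rfl, rfl⟩ | ⟨rfl, rfl⟩
        · exact ⟨[], true, by simp, rfl⟩
        · exact ⟨[], false, by simp, rfl⟩

/-! ### Counting -/

lemma card_lists (m : ℕ) : Nat.card {l : List Bool // l.length = m} = 2 ^ m := by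
  have e : {l : List Bool // l.length = m} ≃ (Fin m → Bool) := Equiv.vectorEquivFin Bool m
  rw [Nat.card_congr e]
  simp [Nat.card_eq_fintype_card]

instance finLists (m : ℕ) : Finite {l : List Bool // l.length = m} :=
  Finite.of_equiv _ (Equiv.vectorEquivFin Bool m).symm

lemma spine_mem (n : ℕ) (hn : 1 ≤ n) (l : List Bool) (hl : l.length = n - 1) :
    IsOrderedRankedTree n (spine 1 l) ∧ IsCat (spine 1 l) :=
  ⟨⟨iLabels_spine l 1 n (by omega), increasing_spine l 1⟩, isCat_spine l 1⟩

lemma pspine_mem (n : ℕ) (hn : 3 ≤ n) (l : List Bool) (hl : l.length = n - 3) (c : Bool) :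
    IsOrderedRankedTree n (pspine 1 l c) ∧ IsPseudoCat (pspine 1 l c) :=
  ⟨⟨iLabels_pspine l c 1 n (by omega), increasing_pspine l c 1⟩,
    notCat_pspine l c 1, noOneTwo_pspine l c 1⟩

theorem count_caterpillar_pseudocaterpillar (n : ℕ) (hn : 4 ≤ n) :
    Nat.card { t : OTree // IsOrderedRankedTree n t ∧ IsCat t } = 2 ^ (n - 1) ∧
      Nat.card { t : OTree // IsOrderedRankedTree n t ∧ IsPseudoCat t } = 2 ^ (n - 2) ∧
        Nat.card { t : OTree // IsOrderedRankedTree n t ∧ (IsCat t ∨ IsPseudoCat t) } =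
          3 * 2 ^ (n - 2) := by
  refine ⟨?_, ?_, ?_⟩
  · rw [← card_lists (n-1)]
    symm
    apply Nat.card_eq_of_bijective
      (fun l : {l : List Bool // l.length = n-1} =>
        (⟨spine 1 l.1, spine_mem n (by omega) l.1 l.2⟩ :
          { t : OTree // IsOrderedRankedTree n t ∧ IsCat t }))
    constructor
    · intro x y hxy
      exact Subtype.ext (spine_inj x.1 y.1 1 (congrArg Subtype.val hxy))
    · rintro ⟨t, ⟨hlab, hinc⟩, hcat⟩
      obtain ⟨bs, hlen, rfl⟩ := cat_struct t hinc hcat 1 n (by omega) hlab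
      exact ⟨⟨bs, by omega⟩, Subtype.ext rfl⟩
  · have hpc : Nat.card ({l : List Bool // l.length = n-3} × Bool) = 2 ^ (n-2) := by
      rw [Nat.card_prod, card_lists]
      have : Nat.card Bool = 2 := by simp [Nat.card_eq_fintype_card]
      rw [this, ← pow_succ]
      congr 1
      omega
    rw [← hpc]
    symm
    apply Nat.card_eq_of_bijective
      (fun p : {l : List Bool // l.length = n-3} × Bool =>
        (⟨pspine 1 p.1.1 p.2, pspine_mem n (by omega) p.1.1 p.1.2 p.2⟩ :
          { t : OTree // IsOrderedRankedTree n t ∧ IsPseudoCat t }))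
    constructor
    · intro x y hxy
      obtain ⟨h1, h2⟩ := pspine_inj x.1.1 y.1.1 x.2 y.2 1 (congrArg Subtype.val hxy)
      exact Prod.ext (Subtype.ext h1) h2
    · rintro ⟨t, ⟨hlab, hinc⟩, hncat, hno⟩
      obtain ⟨bs, c, hlen, rfl⟩ := pseudo_struct t hinc hno hncat 1 n hlab
      exact ⟨⟨⟨bs, by omega⟩, c⟩, Subtype.ext rfl⟩
  · have key : Nat.card ({l : List Bool // l.length = n-1} ⊕
        ({l : List Bool // l.length = n-3} × Bool)) =
        Nat.card { t : OTree // IsOrderedRankedTree n t ∧ (IsCat t ∨ IsPseudoCat t) } := by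
      apply Nat.card_eq_of_bijective
        (fun x => match x with
          | .inl l => ⟨spine 1 l.1, (spine_mem n (by omega) l.1 l.2).1,
              Or.inl (spine_mem n (by omega) l.1 l.2).2⟩
          | .inr p => ⟨pspine 1 p.1.1 p.2, (pspine_mem n (by omega) p.1.1 p.1.2 p.2).1,
              Or.inr (pspine_mem n (by omega) p.1.1 p.1.2 p.2).2⟩)
      constructor
      · intro x y hxy
        have hv := congrArg Subtype.val hxy
        cases x with
        | inl a =>
          cases y with
          | inl b =>
            simp only at hv
            exact congrArg Sum.inl (Subtype.ext (spine_inj a.1 b.1 1 hv))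
          | inr b =>
            simp only at hv
            exact absurd (hv ▸ isCat_spine a.1 1) (notCat_pspine b.1.1 b.2 1)
        | inr a =>
          cases y with
          | inl b =>
            simp only at hv
            exact absurd (hv.symm ▸ isCat_spine b.1 1) (notCat_pspine a.1.1 a.2 1)
          | inr b =>
            simp only at hv
            obtain ⟨h1, h2⟩ := pspine_inj a.1.1 b.1.1 a.2 b.2 1 hv
            exact congrArg Sum.inr (Prod.ext (Subtype.ext h1) h2)
      · rintro ⟨t, ⟨hlab, hinc⟩, hcp⟩
        rcases hcp with hcat | ⟨hncat, hno⟩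
        · obtain ⟨bs, hlen, rfl⟩ := cat_struct t hinc hcat 1 n (by omega) hlab
          exact ⟨.inl ⟨bs, by omega⟩, Subtype.ext rfl⟩
        · obtain ⟨bs, c, hlen, rfl⟩ := pseudo_struct t hinc hno hncat 1 n hlab
          exact ⟨.inr ⟨⟨bs, by omega⟩, c⟩, Subtype.ext rfl⟩
    rw [← key, Nat.card_sum, card_lists, Nat.card_prod, card_lists]
    have h2 : Nat.card Bool = 2 := by simp [Nat.card_eq_fintype_card]
    rw [h2, ← pow_succ]
    have e1 : n - 1 = (n-2) + 1 := by omega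
    have e2 : n - 3 + 1 = (n-2) := by omega
    rw [e1, e2, pow_succ]
    ring
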